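/- Let A be a Banach algebra and U a Banach A-bimodule. Suppose there exist A-bimodule homomorphisms φ : A → U and ψ : U → A (i.e. linear maps commuting with both module actions) such that φ ∘ ψ = id_U. If every derivation on the module extension Banach algebra T(A,U) is continuous, then every derivation on A is continuous. -/

import Mathlib

/-- Multiplication of the module extension (trivial extension) algebra `T(A,U) = A × U`:
`(a,u)(b,v) = (ab, a·v + u·b)`. Here `l` and `r` are the (continuous bilinear) left and right
actions of the Banach algebra `A` on the Banach `A`-bimodule `U`, and the ℓ¹-norm on `A × U`
induces the product topology. -/
noncomputable def trivMul {A U : Type*} [NonUnitalNormedRing A] [NormedSpace ℂ A]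
    [NormedAddCommGroup U] [NormedSpace ℂ U]
    (l : A →L[ℂ] U →L[ℂ] U) (r : U →L[ℂ] A →L[ℂ] U) (x y : A × U) : A × U :=
  (x.1 * y.1, l x.1 y.2 + r x.2 y.1)

theorem stmt7
    {A U : Type*}
    [NonUnitalNormedRing A] [NormedSpace ℂ A] [IsScalarTower ℂ A A] [SMulCommClass ℂ A A]
    [CompleteSpace A]
    [NormedAddCommGroup U] [NormedSpace ℂ U] [CompleteSpace U]
    (l : A →L[ℂ] U →L[ℂ] U) (r : U →L[ℂ] A →L[ℂ] U)
    (hl : ∀ (a b : A) (u : U), l (a * b) u = l a (l b u))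
    (hr : ∀ (u : U) (a b : A), r u (a * b) = r (r u a) b)
    (hlr : ∀ (a : A) (u : U) (b : A), r (l a u) b = l a (r u b))
    -- `φ : A → U` is a linear `A`-bimodule homomorphism:
    (φ : A →ₗ[ℂ] U)
    (hφl : ∀ a b : A, φ (a * b) = l a (φ b))
    (hφr : ∀ a b : A, φ (b * a) = r (φ b) a)
    -- `ψ : U → A` is a linear `A`-bimodule homomorphism:
    (ψ : U →ₗ[ℂ] A)
    (hψl : ∀ (a : A) (u : U), ψ (l a u) = a * ψ u)
    (hψr : ∀ (a : A) (u : U), ψ (r u a) = ψ u * a)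
    -- `φ ∘ ψ = id_U`:
    (hφψ : ∀ u : U, φ (ψ u) = u)
    -- every derivation on `T(A,U)` is continuous:
    (hT : ∀ D : (A × U) →ₗ[ℂ] (A × U),
      (∀ x y : A × U, D (trivMul l r x y) = trivMul l r x (D y) + trivMul l r (D x) y) →
        Continuous D) :
    -- every derivation on `A` is continuous:
    ∀ δ : A →ₗ[ℂ] A, (∀ a b : A, δ (a * b) = a * δ b + δ a * b) → Continuous δ := by
  intro δ hδ
  set D : (A × U) →ₗ[ℂ] (A × U) := LinearMap.prodMap δ (φ ∘ₗ δ ∘ₗ ψ) with hD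
  have hder : ∀ x y : A × U, D (trivMul l r x y) = trivMul l r x (D y) + trivMul l r (D x) y := by
    rintro ⟨a, u⟩ ⟨b, v⟩
    simp only [hD, trivMul, LinearMap.prodMap_apply, LinearMap.coe_comp, Function.comp_apply,
      Prod.map_apply, Prod.mk_add_mk, Prod.mk.injEq]
    constructor
    · exact hδ a b
    · rw [map_add, map_add, hψl, hψr, hδ, hδ, map_add, map_add, hφl a (δ (ψ v)), hφl (δ a) (ψ v), map_add, hφr (δ b) (ψ u), hφr b (δ (ψ u)), hφψ, hφψ]
      abel
  have hcont := hT D hder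
  have h1 : Continuous (fun a : A => (a, (0 : U))) := by continuity
  have h2 : Continuous (fun a : A => (D (a, 0)).1) := (continuous_fst.comp hcont).comp h1
  have : (fun a : A => (D (a, 0)).1) = fun a => δ a := by
    funext a; simp [hD]
  rwa [this] at h2
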